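/- For every monoid H, the restricted finitary power monoid P_{fin,×}(H) satisfies the ACC on principal two-sided ideals and is factorable. -/
import Mathlib


open scoped Pointwise

/-- Two-sided divisibility in a monoid: `x` divides `y` if `y = u * x * v` for some `u, v`. -/
def DvdTS {M : Type*} [Monoid M] (x y : M) : Prop := ∃ u v : M, y = u * x * v

/-- A unit-divisor is a divisor of the identity. -/
def IsUnitDivisor {M : Type*} [Monoid M] (x : M) : Prop := DvdTS x 1

/-- `x` is a proper divisor of `y` if `x` divides `y` but `y` does not divide `x`. -/
def IsProperDivisorTS {M : Type*} [Monoid M] (x y : M) : Prop := DvdTS x y ∧ ¬ DvdTS y x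

/-- An atom is a non-unit that is not a product of two non-units. -/
def IsAtomTS {M : Type*} [Monoid M] (a : M) : Prop :=
  ¬ IsUnit a ∧ ∀ b c : M, a = b * c → IsUnit b ∨ IsUnit c

/-- A quark is a non-unit-divisor all of whose proper divisors are unit-divisors. -/
def IsQuarkTS {M : Type*} [Monoid M] (a : M) : Prop :=
  ¬ IsUnitDivisor a ∧ ∀ b : M, IsProperDivisorTS b a → IsUnitDivisor b

/-- An irreducible is a non-unit-divisor with no factorization `a = b * c` into proper
divisors that are not unit-divisors. -/
def IsIrredTS {M : Type*} [Monoid M] (a : M) : Prop :=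
  ¬ IsUnitDivisor a ∧
    ¬ ∃ b c : M, a = b * c ∧ IsProperDivisorTS b a ∧ IsProperDivisorTS c a ∧
      ¬ IsUnitDivisor b ∧ ¬ IsUnitDivisor c

def DedekindFiniteM (M : Type*) [Monoid M] : Prop := ∀ x y : M, x * y = 1 → y * x = 1

/-- ACC on principal two-sided ideals: no infinite sequence of consecutive proper divisors. -/
def ACCPrincipalTS (M : Type*) [Monoid M] : Prop :=
  ¬ ∃ f : ℕ → M, ∀ n : ℕ, IsProperDivisorTS (f (n + 1)) (f n)

/-- Factorable: every non-unit-divisor is a (non-empty) product of irreducibles. -/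
def FactorableM (M : Type*) [Monoid M] : Prop :=
  ∀ x : M, ¬ IsUnitDivisor x →
    ∃ l : List M, l ≠ [] ∧ (∀ a ∈ l, IsIrredTS a) ∧ l.prod = x

/-- Atomic: every non-unit-divisor is a (non-empty) product of atoms. -/
def AtomicM (M : Type*) [Monoid M] : Prop :=
  ∀ x : M, ¬ IsUnitDivisor x →
    ∃ l : List M, l ≠ [] ∧ (∀ a ∈ l, IsAtomTS a) ∧ l.prod = x

/-- The finitary power monoid: non-empty finite subsets of `H` under setwise multiplication. -/
def PfinM (H : Type*) [Monoid H] : Submonoid (Set H) where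
  carrier := {X : Set H | X.Finite ∧ X.Nonempty}
  mul_mem' := fun hX hY => ⟨hX.1.mul hY.1, hX.2.mul hY.2⟩
  one_mem' := ⟨Set.finite_one, 1, Set.mem_one.mpr rfl⟩

/-- The restricted finitary power monoid: non-empty finite subsets of `H` containing a unit. -/
def PfinTimes (H : Type*) [Monoid H] : Submonoid (Set H) where
  carrier := {X : Set H | X.Finite ∧ ∃ u ∈ X, IsUnit u}
  mul_mem' := by
    rintro X Y ⟨hXf, u, hu, hu'⟩ ⟨hYf, v, hv, hv'⟩
    exact ⟨hXf.mul hYf, u * v, Set.mul_mem_mul hu hv, hu'.mul hv'⟩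
  one_mem' := ⟨Set.finite_one, 1, Set.mem_one.mpr rfl, isUnit_one⟩

/-- The reduced finitary power monoid: finite subsets of `H` containing `1`. -/
def PfinOne (H : Type*) [Monoid H] : Submonoid (Set H) where
  carrier := {X : Set H | X.Finite ∧ (1 : H) ∈ X}
  mul_mem' := by
    rintro X Y ⟨hXf, hX1⟩ ⟨hYf, hY1⟩
    exact ⟨hXf.mul hYf, by simpa using Set.mul_mem_mul hX1 hY1⟩
  one_mem' := ⟨Set.finite_one, Set.mem_one.mpr rfl⟩

lemma mem_PfinM {H : Type*} [Monoid H] {X : Set H} :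
    X ∈ PfinM H ↔ X.Finite ∧ X.Nonempty := Iff.rfl

lemma mem_PfinTimes {H : Type*} [Monoid H] {X : Set H} :
    X ∈ PfinTimes H ↔ X.Finite ∧ ∃ u ∈ X, IsUnit u := Iff.rfl

lemma mem_PfinOne {H : Type*} [Monoid H] {X : Set H} :
    X ∈ PfinOne H ↔ X.Finite ∧ (1 : H) ∈ X := Iff.rfl

/-- Acyclic: `u * x * v ≠ x` whenever `u` or `v` is a non-unit. -/
def AcyclicM (M : Type*) [Monoid M] : Prop :=
  ∀ u v x : M, (¬ IsUnit u ∨ ¬ IsUnit v) → u * x * v ≠ x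

/-- Unit-cancellative: `x * y ≠ x ≠ y * x` whenever `y` is a non-unit. -/
def UnitCancellativeM (M : Type*) [Monoid M] : Prop :=
  ∀ x y : M, ¬ IsUnit y → x * y ≠ x ∧ y * x ≠ x

/-- Strongly unit-cancellative: `x * y ≠ x ≠ y * x` whenever `y ≠ 1`. -/
def StrongUnitCancellativeM (M : Type*) [Monoid M] : Prop :=
  ∀ x y : M, y ≠ 1 → x * y ≠ x ∧ y * x ≠ x

/-- Torsion-free: the identity is the only element with finitely many powers. -/
def TorsionFreeM (M : Type*) [Monoid M] : Prop :=
  ∀ x : M, (Set.range fun k : ℕ => x ^ k).Finite → x = 1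

/-- Cancellative monoid. -/
def CancellativeM (M : Type*) [Monoid M] : Prop :=
  ∀ a x y : M, (a * x = a * y → x = y) ∧ (x * a = y * a → x = y)

/-- The set of lengths of (irreducible) factorizations of `x`, with the conventions
`L(1) = {0}` and `L(u) = ∅` for a unit-divisor `u ≠ 1`. -/
def LengthSet {M : Type*} [Monoid M] (x : M) : Set ℕ :=
  {n | (x = 1 ∧ n = 0) ∨
    (¬ IsUnitDivisor x ∧
      ∃ l : List M, l.length = n ∧ l ≠ [] ∧ (∀ a ∈ l, IsIrredTS a) ∧ l.prod = x)}

/-- The system of lengths: the family of non-empty length sets. -/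
def SystemOfLengths (M : Type*) [Monoid M] : Set (Set ℕ) :=
  {L | L.Nonempty ∧ ∃ x : M, LengthSet x = L}

lemma singleton_mul_mul_singleton' {H : Type*} [Monoid H] (a b : H) (s : Set H) :
    {a} * s * {b} = (fun x => a * x * b) '' s := by
  rw [Set.singleton_mul, Set.mul_singleton, ← Set.image_comp]; rfl

lemma pfin_card_lt_of_proper {H : Type*} [Monoid H] {X Y : PfinTimes H}
    (h : IsProperDivisorTS X Y) : (X : Set H).ncard < (Y : Set H).ncard := by
  obtain ⟨⟨U, V, hUV⟩, hnd⟩ := h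
  obtain ⟨u0, hu0, hu0u⟩ := U.2.2
  obtain ⟨v0, hv0, hv0u⟩ := V.2.2
  obtain ⟨u, rfl⟩ := hu0u
  obtain ⟨v, rfl⟩ := hv0u
  have hYval : (Y : Set H) = (U : Set H) * (X : Set H) * (V : Set H) := by
    rw [hUV]; rfl
  set f : H → H := fun x => ↑u * x * ↑v with hf
  have hkey : ∀ x : H, ↑u⁻¹ * (f x) * ↑v⁻¹ = x := by
    intro x; simp [hf, mul_assoc]
  have hinj : Function.Injective f := by
    intro a b hab
    rw [← hkey a, ← hkey b, hab]
  have hsub : f '' (X : Set H) ⊆ (Y : Set H) := by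
    rintro _ ⟨x, hx, rfl⟩
    rw [hYval]
    exact Set.mul_mem_mul (Set.mul_mem_mul hu0 hx) hv0
  have himg : (f '' (X : Set H)).ncard = (X : Set H).ncard :=
    Set.ncard_image_of_injective _ hinj
  have hle : (X : Set H).ncard ≤ (Y : Set H).ncard := by
    rw [← himg]; exact Set.ncard_le_ncard hsub Y.2.1
  rcases lt_or_eq_of_le hle with hlt | heq
  · exact hlt
  · exfalso
    apply hnd
    have heqset : f '' (X : Set H) = (Y : Set H) :=
      Set.eq_of_subset_of_ncard_le hsub (by rw [himg, heq]) Y.2.1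
    have hXval : (X : Set H) = (fun y => (↑u⁻¹ : H) * y * (↑v⁻¹ : H)) '' (Y : Set H) := by
      rw [← heqset, Set.image_image]
      simp only [hkey, Set.image_id']
    refine ⟨⟨{(↑u⁻¹ : H)}, Set.finite_singleton _, _, rfl, u⁻¹.isUnit⟩,
      ⟨{(↑v⁻¹ : H)}, Set.finite_singleton _, _, rfl, v⁻¹.isUnit⟩, ?_⟩
    apply Subtype.ext
    show (X : Set H) = {(↑u⁻¹ : H)} * (Y : Set H) * {(↑v⁻¹ : H)}
    rw [singleton_mul_mul_singleton']
    exact hXval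

/-- `P_{fin,×}(H)` satisfies the ACC on principal two-sided ideals and is
factorable. -/
theorem pfinTimes_ACC_and_factorable (H : Type*) [Monoid H] :
    ACCPrincipalTS (PfinTimes H) ∧ FactorableM (PfinTimes H) := by
  constructor
  · rintro ⟨f, hf⟩
    have hdec : ∀ n, ((f (n + 1)) : Set H).ncard < ((f n) : Set H).ncard :=
      fun n => pfin_card_lt_of_proper (hf n)
    have hbd : ∀ n, ((f n) : Set H).ncard + n ≤ ((f 0) : Set H).ncard := by
      intro n
      induction n with
      | zero => omega
      | succ n ih => have := hdec n; omega
    have := hbd (((f 0) : Set H).ncard + 1)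
    omega
  · suffices h : ∀ n (X : PfinTimes H), (X : Set H).ncard ≤ n → ¬ IsUnitDivisor X →
        ∃ l : List (PfinTimes H), l ≠ [] ∧ (∀ a ∈ l, IsIrredTS a) ∧ l.prod = X by
      exact fun X hX => h _ X le_rfl hX
    intro n
    induction n with
    | zero =>
      intro X hX _
      exfalso
      obtain ⟨u0, hu0, _⟩ := X.2.2
      have : (X : Set H) = ∅ := by
        rw [← Set.ncard_eq_zero X.2.1]; omega
      rw [this] at hu0
      exact hu0
    | succ n ih =>
      intro X hX hXu
      by_cases hirr : IsIrredTS X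
      · exact ⟨[X], by simp, by simp [hirr], by simp⟩
      · have hex : ∃ b c : PfinTimes H, X = b * c ∧ IsProperDivisorTS b X ∧
            IsProperDivisorTS c X ∧ ¬ IsUnitDivisor b ∧ ¬ IsUnitDivisor c := by
          by_contra hcon
          exact hirr ⟨hXu, hcon⟩
        obtain ⟨B, C, hBC, hBp, hCp, hBu, hCu⟩ := hex
        have hB := pfin_card_lt_of_proper hBp
        have hC := pfin_card_lt_of_proper hCp
        obtain ⟨lB, hlB0, hlBi, hlBp⟩ := ih B (by omega) hBu
        obtain ⟨lC, hlC0, hlCi, hlCp⟩ := ih C (by omega) hCu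
        refine ⟨lB ++ lC, by simp [hlB0], ?_, ?_⟩
        · intro a ha
          rcases List.mem_append.mp ha with h | h
          · exact hlBi a h
          · exact hlCi a h
        · rw [List.prod_append, hlBp, hlCp, hBC]
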